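/- Let Z be a p×n random matrix with i.i.d. standard normal entries, let Σ be a real symmetric positive semidefinite p×p matrix, and set W = (Σ^{1/2}Z)(Σ^{1/2}Z)ᵀ (the central Wishart matrix W_p(n,Σ,0)). Then for every integer i with 1 ≤ i ≤ p ≤ n, E[ Tr_i(W) ] = (n)_i · Tr_i(Σ). -/

import Mathlib

open Matrix MeasureTheory ProbabilityTheory

/-- The law of a `p × n` random matrix with i.i.d. standard normal entries. -/
noncomputable def gaussMatrix (p n : ℕ) : Measure (Fin p → Fin n → ℝ) :=
  Measure.pi fun _ : Fin p => Measure.pi fun _ : Fin n => gaussianReal 0 1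

open Classical in
/-- `Tr_i(S)`: the `i`-th elementary symmetric function of the eigenvalues (listed with
multiplicity) of the real symmetric matrix `S`; junk value `0` if `S` is not symmetric. -/
noncomputable def trElem {ι : Type*} [Fintype ι] [DecidableEq ι]
    (S : Matrix ι ι ℝ) (i : ℕ) : ℝ :=
  if h : S.IsHermitian then
    ∑ J ∈ Finset.powersetCard i (Finset.univ : Finset ι), ∏ j ∈ J, h.eigenvalues j
  else 0

/-- The positive semidefinite square root, as `Matrix.PosSemidef.sqrt` was defined in the
older Mathlib (that declaration has since been removed). -/
noncomputable def psdSqrt {n : Type*} [Fintype n] [DecidableEq n]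
    {A : Matrix n n ℝ} (hA : A.PosSemidef) : Matrix n n ℝ :=
  (hA.1.eigenvectorUnitary : Matrix n n ℝ) * diagonal ((↑) ∘ (√·) ∘ hA.1.eigenvalues) *
    (star (hA.1.eigenvectorUnitary : Matrix n n ℝ))

set_option linter.unusedSectionVars false
open scoped NNReal ENNReal


section CauchyBinet

variable {m : Type*} [Fintype m] [DecidableEq m] [LinearOrder m] [Nonempty m]

/-- The increasing enumeration of a finset of size `i` (junk otherwise). -/
noncomputable def emb (i : ℕ) (K : Finset m) : Fin i → m :=
  if h : K.card = i then K.orderEmbOfFin h else fun _ => Classical.arbitrary m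

lemma emb_eq {i : ℕ} {K : Finset m} (h : K.card = i) :
    emb i K = K.orderEmbOfFin h := dif_pos h

lemma emb_inj {i : ℕ} {K : Finset m} (h : K.card = i) :
    Function.Injective (emb i K) := by
  rw [emb_eq h]; exact (K.orderEmbOfFin h).injective

lemma emb_image {i : ℕ} {K : Finset m} (h : K.card = i) :
    Finset.image (emb i K) Finset.univ = K := by
  apply Finset.eq_of_subset_of_card_le
  · intro x hx
    simp only [Finset.mem_image] at hx
    obtain ⟨j, -, rfl⟩ := hx
    rw [emb_eq h]
    exact K.orderEmbOfFin_mem h j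
  · rw [h, Finset.card_image_of_injective _ (emb_inj h), Finset.card_univ, Fintype.card_fin]

lemma emb_prod {i : ℕ} {K : Finset m} (h : K.card = i) (d : m → ℝ) :
    ∏ k : Fin i, d (emb i K k) = ∏ j ∈ K, d j := by
  conv_rhs => rw [← emb_image h]
  rw [Finset.prod_image (fun a _ b _ hab => emb_inj h hab)]

/-- The permutation relating an injective function to the increasing enumeration of its image. -/
noncomputable def permOf (i : ℕ) (f : Fin i → m) : Equiv.Perm (Fin i) :=
  if h : Function.Injective f then
    Equiv.ofBijective
      (fun j => ((Finset.univ.image f).orderIsoOfFin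
          (by rw [Finset.card_image_of_injective _ h, Finset.card_univ, Fintype.card_fin])).symm
        ⟨f j, Finset.mem_image_of_mem f (Finset.mem_univ j)⟩)
      (Finite.injective_iff_bijective.mp (fun a b hab => by
        apply h
        have := congrArg (fun x => (((Finset.univ.image f).orderIsoOfFin
          (by rw [Finset.card_image_of_injective _ h, Finset.card_univ, Fintype.card_fin])) x : m)) hab
        simpa using this))
  else 1

lemma emb_comp_permOf {i : ℕ} {f : Fin i → m} (h : Function.Injective f) :
    emb i (Finset.univ.image f) ∘ (permOf i f) = f := by
  have hK : (Finset.univ.image f).card = i := by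
    rw [Finset.card_image_of_injective _ h, Finset.card_univ, Fintype.card_fin]
  funext j
  rw [Function.comp_apply, emb_eq hK, permOf, dif_pos h]
  simp [← Finset.coe_orderIsoOfFin_apply]

lemma permOf_emb {i : ℕ} {K : Finset m} (h : K.card = i) (σ : Equiv.Perm (Fin i)) :
    permOf i (emb i K ∘ σ) = σ := by
  have hinj : Function.Injective (emb i K ∘ σ) := (emb_inj h).comp σ.injective
  have hIm : Finset.univ.image (emb i K ∘ σ) = K := by
    rw [← Finset.image_image, Finset.image_univ_equiv, emb_image h]
  have h1 := emb_comp_permOf hinj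
  rw [hIm] at h1
  apply Equiv.coe_fn_injective
  funext j
  exact emb_inj h (congrFun h1 j)

lemma image_emb_comp {i : ℕ} {K : Finset m} (h : K.card = i) (σ : Equiv.Perm (Fin i)) :
    Finset.univ.image (emb i K ∘ σ) = K := by
  rw [← Finset.image_image, Finset.image_univ_equiv, emb_image h]

lemma sum_injective {i : ℕ} (G : (Fin i → m) → ℝ) :
    ∑ f ∈ Finset.univ.filter (fun f : Fin i → m => Function.Injective f), G f
      = ∑ K ∈ Finset.powersetCard i (Finset.univ : Finset m),
          ∑ σ : Equiv.Perm (Fin i), G (emb i K ∘ σ) := by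
  have hcard : ∀ f : Fin i → m, Function.Injective f → (Finset.univ.image f).card = i := by
    intro f hf
    rw [Finset.card_image_of_injective _ hf, Finset.card_univ, Fintype.card_fin]
  have hprod : ∑ x ∈ (Finset.powersetCard i (Finset.univ : Finset m)) ×ˢ
      (Finset.univ : Finset (Equiv.Perm (Fin i))), G (emb i x.1 ∘ x.2)
      = ∑ K ∈ Finset.powersetCard i (Finset.univ : Finset m),
          ∑ σ : Equiv.Perm (Fin i), G (emb i K ∘ σ) := Finset.sum_product _ _ _
  rw [← hprod]
  refine Finset.sum_bij' (fun f _ => (Finset.univ.image f, permOf i f))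
    (fun Kσ _ => emb i Kσ.1 ∘ Kσ.2) ?_ ?_ ?_ ?_ ?_
  · intro f hf
    rw [Finset.mem_filter] at hf
    rw [Finset.mem_product, Finset.mem_powersetCard]
    exact ⟨⟨Finset.subset_univ _, hcard f hf.2⟩, Finset.mem_univ _⟩
  · intro Kσ hKσ
    rw [Finset.mem_product, Finset.mem_powersetCard] at hKσ
    rw [Finset.mem_filter]
    exact ⟨Finset.mem_univ _, (emb_inj hKσ.1.2).comp Kσ.2.injective⟩
  · intro f hf
    rw [Finset.mem_filter] at hf
    exact emb_comp_permOf hf.2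
  · intro Kσ hKσ
    rw [Finset.mem_product, Finset.mem_powersetCard] at hKσ
    exact Prod.ext (image_emb_comp hKσ.1.2 Kσ.2) (permOf_emb hKσ.1.2 Kσ.2)
  · intro f hf
    rw [Finset.mem_filter] at hf
    rw [emb_comp_permOf hf.2]

theorem cauchyBinet {i : ℕ} (A : Matrix (Fin i) m ℝ) (B : Matrix m (Fin i) ℝ) :
    (A * B).det = ∑ K ∈ Finset.powersetCard i (Finset.univ : Finset m),
      (A.submatrix id (emb i K)).det * (B.submatrix (emb i K) id).det := by
  have step1 : (A * B).det = ∑ f : Fin i → m, (A.submatrix id f).det * ∏ k, B (f k) k := by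
    calc (A * B).det
        = ∑ σ : Equiv.Perm (Fin i), (Equiv.Perm.sign σ : ℤ) *
            ∏ k, (∑ l, A (σ k) l * B l k) := by
          rw [Matrix.det_apply']
          simp only [Matrix.mul_apply]
      _ = ∑ σ : Equiv.Perm (Fin i), ∑ f : Fin i → m,
            (Equiv.Perm.sign σ : ℤ) * ∏ k, A (σ k) (f k) * B (f k) k := by
          refine Finset.sum_congr rfl fun σ _ => ?_
          rw [Finset.prod_univ_sum, Finset.mul_sum, Fintype.piFinset_univ]
      _ = ∑ f : Fin i → m, ∑ σ : Equiv.Perm (Fin i),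
            (Equiv.Perm.sign σ : ℤ) * ∏ k, A (σ k) (f k) * B (f k) k := Finset.sum_comm
      _ = ∑ f : Fin i → m, ((A.submatrix id f) * diagonal (fun k => B (f k) k)).det := by
          refine Finset.sum_congr rfl fun f _ => ?_
          rw [Matrix.det_apply']
          refine (Finset.sum_congr rfl fun σ _ => ?_).symm
          congr 1
          refine Finset.prod_congr rfl fun k _ => ?_
          rw [Matrix.mul_diagonal, Matrix.submatrix_apply, id]
      _ = ∑ f : Fin i → m, (A.submatrix id f).det * ∏ k, B (f k) k := by
          refine Finset.sum_congr rfl fun f _ => ?_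
          rw [Matrix.det_mul, Matrix.det_diagonal]
  rw [step1, ← Finset.sum_filter_add_sum_filter_not Finset.univ
    (fun f : Fin i → m => Function.Injective f)]
  have h2 : ∑ f ∈ Finset.univ.filter (fun f : Fin i → m => ¬ Function.Injective f),
      (A.submatrix id f).det * ∏ k, B (f k) k = 0 := by
    refine Finset.sum_eq_zero fun f hf => ?_
    rw [Finset.mem_filter] at hf
    rw [Function.not_injective_iff] at hf
    obtain ⟨a, b, hab, hne⟩ := hf.2
    rw [Matrix.det_zero_of_column_eq hne (fun k => by
      simp only [Matrix.submatrix_apply, hab])]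
    ring
  rw [h2, add_zero, sum_injective]
  refine Finset.sum_congr rfl fun K hK => ?_
  rw [Finset.mem_powersetCard] at hK
  have hKc := hK.2
  calc ∑ σ : Equiv.Perm (Fin i), (A.submatrix id (emb i K ∘ σ)).det * ∏ k, B ((emb i K ∘ σ) k) k
      = ∑ σ : Equiv.Perm (Fin i), (A.submatrix id (emb i K)).det *
          ((Equiv.Perm.sign σ : ℤ) * ∏ k, (B.submatrix (emb i K) id) (σ k) k) := by
        refine Finset.sum_congr rfl fun σ _ => ?_
        have : A.submatrix id (emb i K ∘ σ) = (A.submatrix id (emb i K)).submatrix id σ := by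
          rw [Matrix.submatrix_submatrix]; rfl
        rw [this, Matrix.det_permute']
        simp only [Matrix.submatrix_apply, Function.comp_apply, id]
        ring
    _ = (A.submatrix id (emb i K)).det * (B.submatrix (emb i K) id).det := by
        rw [← Finset.mul_sum]
        congr 1
        exact (Matrix.det_apply' _).symm

end CauchyBinet


section Gauss

lemma gaussPDFReal_eq (x : ℝ) :
    gaussianPDFReal 0 1 x = (Real.sqrt (2 * Real.pi))⁻¹ * Real.exp (-x ^ 2 / 2) := by
  simp [gaussianPDFReal]

lemma gauss_integral_eq (g : ℝ → ℝ) :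
    ∫ x, g x ∂(gaussianReal 0 1) = ∫ x, gaussianPDFReal 0 1 x * g x := by
  rw [gaussianReal_of_var_ne_zero 0 one_ne_zero]
  have h : gaussianPDF 0 1 = fun x => ((Real.toNNReal (gaussianPDFReal 0 1 x) : ℝ≥0) : ℝ≥0∞) := by
    funext x
    rfl
  rw [h, integral_withDensity_eq_integral_smul
    ((measurable_gaussianPDFReal 0 1).real_toNNReal) g]
  refine integral_congr_ae (Filter.Eventually.of_forall fun x => ?_)
  show (gaussianPDFReal 0 1 x).toNNReal • g x = gaussianPDFReal 0 1 x * g x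
  rw [NNReal.smul_def, Real.coe_toNNReal _ (gaussianPDFReal_nonneg 0 1 x), smul_eq_mul]

lemma integrable_poly_exp (k : ℕ) :
    Integrable (fun x : ℝ => x ^ k * Real.exp (-x ^ 2 / 2)) := by
  refine Integrable.mono'
    ((integrable_exp_neg_mul_sq (show (0:ℝ) < 1/4 by norm_num)).const_mul
      ((k.factorial : ℝ) * Real.exp 1))
    (((continuous_pow k).mul (Continuous.rexp (by continuity))).aestronglyMeasurable)
    (Filter.Eventually.of_forall fun x => ?_)
  have habs : ‖x ^ k * Real.exp (-x ^ 2 / 2)‖ = |x| ^ k * Real.exp (-x ^ 2 / 2) := by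
    rw [norm_mul, Real.norm_eq_abs, Real.norm_eq_abs, abs_pow,
      Real.abs_exp]
  rw [habs]
  have h1 : |x| ^ k ≤ k.factorial * Real.exp |x| := by
    have h := Real.pow_div_factorial_le_exp |x| (abs_nonneg x) k
    have hk : (0:ℝ) < k.factorial := by positivity
    calc |x| ^ k = (|x| ^ k / k.factorial) * k.factorial := by field_simp
      _ ≤ Real.exp |x| * k.factorial := by
          exact mul_le_mul_of_nonneg_right h hk.le
      _ = k.factorial * Real.exp |x| := by ring
  have h2 : |x| ≤ x ^ 2 / 4 + 1 := by
    nlinarith [sq_nonneg (|x| - 2), sq_abs x]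
  calc |x| ^ k * Real.exp (-x ^ 2 / 2)
      ≤ (k.factorial * Real.exp |x|) * Real.exp (-x ^ 2 / 2) := by
        exact mul_le_mul_of_nonneg_right h1 (Real.exp_nonneg _)
    _ = k.factorial * Real.exp (|x| + -x ^ 2 / 2) := by rw [Real.exp_add]; ring
    _ ≤ k.factorial * Real.exp (1 + -x ^ 2 / 4) := by
        have : |x| + -x ^ 2 / 2 ≤ 1 + -x ^ 2 / 4 := by linarith
        have hk : (0:ℝ) ≤ k.factorial := by positivity
        exact mul_le_mul_of_nonneg_left (Real.exp_le_exp.mpr this) hk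
    _ = k.factorial * Real.exp 1 * Real.exp (-(1/4) * x ^ 2) := by
        rw [Real.exp_add]; ring_nf
  
lemma integrable_pow_gauss (k : ℕ) :
    Integrable (fun x : ℝ => x ^ k) (gaussianReal 0 1) := by
  rw [gaussianReal_of_var_ne_zero 0 one_ne_zero,
    integrable_withDensity_iff (measurable_gaussianPDF 0 1)
      (ae_of_all _ fun x => ENNReal.ofReal_lt_top)]
  have h : (fun x : ℝ => x ^ k * (gaussianPDF 0 1 x).toReal)
      = fun x : ℝ => (Real.sqrt (2 * Real.pi))⁻¹ * (x ^ k * Real.exp (-x ^ 2 / 2)) := by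
    funext x
    rw [gaussianPDF, ENNReal.toReal_ofReal (gaussianPDFReal_nonneg 0 1 x), gaussPDFReal_eq]
    ring
  rw [h]
  exact (integrable_poly_exp k).const_mul _

lemma gauss_m0 : ∫ x, x ^ 0 ∂(gaussianReal 0 1) = 1 := by
  simp

lemma gauss_m1 : ∫ x, x ^ 1 ∂(gaussianReal 0 1) = 0 := by
  rw [gauss_integral_eq]
  have hodd : ∀ x : ℝ, gaussianPDFReal 0 1 (-x) * (-x) ^ 1
      = -(gaussianPDFReal 0 1 x * x ^ 1) := by
    intro x
    rw [gaussPDFReal_eq, gaussPDFReal_eq, neg_sq]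
    ring
  have h := MeasureTheory.integral_neg_eq_self (fun x : ℝ => gaussianPDFReal 0 1 x * x ^ 1) volume
  rw [show (fun x : ℝ => gaussianPDFReal 0 1 (-x) * (-x) ^ 1)
      = fun x : ℝ => -(gaussianPDFReal 0 1 x * x ^ 1) from funext hodd] at h
  rw [integral_neg] at h
  linarith

lemma integral_sq_exp : ∫ x : ℝ, x ^ 2 * Real.exp (-x ^ 2 / 2) = Real.sqrt (2 * Real.pi) := by
  have hd : ∀ x : ℝ, HasDerivAt (fun y : ℝ => -y * Real.exp (-y ^ 2 / 2))
      ((x ^ 2 - 1) * Real.exp (-x ^ 2 / 2)) x := by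
    intro x
    have h1 : HasDerivAt (fun y : ℝ => -y ^ 2 / 2) (-x) x := by
      have := ((hasDerivAt_pow 2 x).neg.div_const 2)
      refine this.congr_deriv ?_
      push_cast
      ring
    have h2 : HasDerivAt (fun y : ℝ => Real.exp (-y ^ 2 / 2))
        (Real.exp (-x ^ 2 / 2) * (-x)) x := h1.exp
    have h3 : HasDerivAt (fun y : ℝ => -y) (-1) x := (hasDerivAt_id x).neg
    have := h3.mul h2
    refine this.congr_deriv ?_
    ring
  have hint : Integrable (fun x : ℝ => (x ^ 2 - 1) * Real.exp (-x ^ 2 / 2)) := by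
    have := (integrable_poly_exp 2).sub (integrable_poly_exp 0)
    refine this.congr (Filter.Eventually.of_forall fun x => ?_)
    simp only [Pi.sub_apply]
    ring
  have hf : Integrable (fun x : ℝ => -x * Real.exp (-x ^ 2 / 2)) := by
    have := (integrable_poly_exp 1).neg
    refine this.congr (Filter.Eventually.of_forall fun x => ?_)
    simp only [Pi.neg_apply]
    ring
  have hzero := integral_eq_zero_of_hasDerivAt_of_integrable hd hint hf
  have hsplit : ∫ x : ℝ, (x ^ 2 - 1) * Real.exp (-x ^ 2 / 2)
      = (∫ x : ℝ, x ^ 2 * Real.exp (-x ^ 2 / 2)) - ∫ x : ℝ, Real.exp (-x ^ 2 / 2) := by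
    rw [← integral_sub (integrable_poly_exp 2) (by simpa using integrable_poly_exp 0)]
    refine integral_congr_ae (Filter.Eventually.of_forall fun x => ?_)
    ring
  have hgauss : ∫ x : ℝ, Real.exp (-x ^ 2 / 2) = Real.sqrt (2 * Real.pi) := by
    have := integral_gaussian (1/2 : ℝ)
    rw [show Real.pi / (1/2 : ℝ) = 2 * Real.pi by ring] at this
    rw [← this]
    refine integral_congr_ae (Filter.Eventually.of_forall fun x => ?_)
    ring_nf
  rw [hsplit, hgauss] at hzero
  linarith

lemma gauss_m2 : ∫ x, x ^ 2 ∂(gaussianReal 0 1) = 1 := by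
  rw [gauss_integral_eq]
  have h : (fun x : ℝ => gaussianPDFReal 0 1 x * x ^ 2)
      = fun x : ℝ => (Real.sqrt (2 * Real.pi))⁻¹ * (x ^ 2 * Real.exp (-x ^ 2 / 2)) := by
    funext x
    rw [gaussPDFReal_eq]
    ring
  rw [h, integral_const_mul, integral_sq_exp]
  rw [inv_mul_cancel₀]
  positivity

end Gauss

section PiIntegral

variable {p n : ℕ}

set_option maxHeartbeats 1000000 in
lemma integral_pi_pi (f : Fin p → Fin n → ℝ → ℝ) :
    ∫ Z, (∏ l, ∏ c, f l c (Z l c)) ∂gaussMatrix p n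
      = ∏ l, ∏ c, ∫ x, f l c x ∂(gaussianReal 0 1) := by
  letI : MeasureSpace ℝ := ⟨gaussianReal 0 1⟩
  haveI : SigmaFinite (volume : Measure ℝ) :=
    inferInstanceAs (SigmaFinite (gaussianReal 0 1))
  have h : gaussMatrix p n = (volume : Measure (Fin p → Fin n → ℝ)) := rfl
  rw [h]
  refine (MeasureTheory.integral_fintype_prod_eq_prod (ι := Fin p)
    (μ := fun _ => (volume : Measure (Fin n → ℝ)))
    (fun l (z : Fin n → ℝ) => ∏ c, f l c (z c))).trans ?_
  exact Finset.prod_congr rfl fun l _ =>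
    MeasureTheory.integral_fintype_prod_eq_prod (ι := Fin n) (μ := fun _ => gaussianReal 0 1)
      (fun c x => f l c x)

set_option maxHeartbeats 1000000 in
lemma integrable_pi_pi (f : Fin p → Fin n → ℝ → ℝ)
    (hf : ∀ l c, Integrable (f l c) (gaussianReal 0 1)) :
    Integrable (fun Z : Fin p → Fin n → ℝ => ∏ l, ∏ c, f l c (Z l c)) (gaussMatrix p n) := by
  letI : MeasureSpace ℝ := ⟨gaussianReal 0 1⟩
  haveI : SigmaFinite (volume : Measure ℝ) :=
    inferInstanceAs (SigmaFinite (gaussianReal 0 1))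
  have h : gaussMatrix p n = (volume : Measure (Fin p → Fin n → ℝ)) := rfl
  rw [h]
  exact Integrable.fintype_prod_dep fun l => Integrable.fintype_prod_dep fun c => hf l c

/-- indicator exponent -/
def dexp {p n : ℕ} (u : Fin p) (v : Fin n) (l : Fin p) (c : Fin n) : ℕ :=
  if l = u ∧ c = v then 1 else 0

/-- exponent pattern of the monomial `∏ k, Z (a k) (e' k) * Z (b k) (e' k)` -/
def mexp {i : ℕ} (a b : Fin i → Fin p) (e' : Fin i → Fin n) (l : Fin p) (c : Fin n) : ℕ :=
  ∑ k, (dexp (a k) (e' k) l c + dexp (b k) (e' k) l c)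

lemma single_factor {p n : ℕ} (u : Fin p) (v : Fin n) (Z : Fin p → Fin n → ℝ) :
    Z u v = ∏ l, ∏ c, (Z l c) ^ (dexp u v l c) := by
  have h1 : ∀ l : Fin p, (∏ c, (Z l c) ^ (dexp u v l c))
      = if l = u then Z l v else 1 := by
    intro l
    by_cases hl : l = u
    · subst hl
      simp [dexp, pow_ite, Finset.prod_ite_eq']
    · simp [dexp, hl]
  rw [Finset.prod_congr rfl fun l _ => h1 l]
  simp [Finset.prod_ite_eq']

lemma monomial_eq {i : ℕ} (a b : Fin i → Fin p) (e' : Fin i → Fin n)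
    (Z : Fin p → Fin n → ℝ) :
    (∏ k, Z (a k) (e' k) * Z (b k) (e' k))
      = ∏ l, ∏ c, (Z l c) ^ (mexp a b e' l c) := by
  have step : ∀ k : Fin i, Z (a k) (e' k) * Z (b k) (e' k)
      = ∏ l, ∏ c, (Z l c) ^ (dexp (a k) (e' k) l c + dexp (b k) (e' k) l c) := by
    intro k
    rw [show (∏ l, ∏ c, (Z l c) ^ (dexp (a k) (e' k) l c + dexp (b k) (e' k) l c))
        = (∏ l, ∏ c, (Z l c) ^ (dexp (a k) (e' k) l c))
          * (∏ l, ∏ c, (Z l c) ^ (dexp (b k) (e' k) l c)) by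
      rw [← Finset.prod_mul_distrib]
      refine Finset.prod_congr rfl fun l _ => ?_
      rw [← Finset.prod_mul_distrib]
      exact Finset.prod_congr rfl fun c _ => (pow_add _ _ _)]
    rw [← single_factor, ← single_factor]
  calc ∏ k, Z (a k) (e' k) * Z (b k) (e' k)
      = ∏ k, ∏ l, ∏ c, (Z l c) ^ (dexp (a k) (e' k) l c + dexp (b k) (e' k) l c) :=
        Finset.prod_congr rfl fun k _ => step k
    _ = ∏ l, ∏ k, ∏ c, (Z l c) ^ (dexp (a k) (e' k) l c + dexp (b k) (e' k) l c) :=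
        Finset.prod_comm
    _ = ∏ l, ∏ c, ∏ k, (Z l c) ^ (dexp (a k) (e' k) l c + dexp (b k) (e' k) l c) :=
        Finset.prod_congr rfl fun l _ => Finset.prod_comm
    _ = ∏ l, ∏ c, (Z l c) ^ (mexp a b e' l c) :=
        Finset.prod_congr rfl fun l _ => Finset.prod_congr rfl fun c _ =>
          Finset.prod_pow_eq_pow_sum _ _ _

end PiIntegral
section Wick

variable {p n : ℕ}

lemma mexp_eq_zero {i : ℕ} (a b : Fin i → Fin p) (e' : Fin i → Fin n)
    (l : Fin p) (c : Fin n) (hc : c ∉ Finset.univ.image e') :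
    mexp a b e' l c = 0 := by
  refine Finset.sum_eq_zero fun k _ => ?_
  have hck : c ≠ e' k := fun h => hc (by rw [h]; exact Finset.mem_image_of_mem e' (Finset.mem_univ k))
  simp [dexp, hck]

lemma mexp_col {i : ℕ} (a b : Fin i → Fin p) (e' : Fin i → Fin n)
    (he' : Function.Injective e') (l : Fin p) (k : Fin i) :
    mexp a b e' l (e' k) = (if l = a k then 1 else 0) + (if l = b k then 1 else 0) := by
  rw [mexp, Finset.sum_congr rfl (fun k' _ =>
    show dexp (a k') (e' k') l (e' k) + dexp (b k') (e' k') l (e' k)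
      = if k' = k then ((if l = a k' then 1 else 0) + (if l = b k' then 1 else 0)) else 0 from by
    by_cases hk : k' = k
    · subst hk; simp [dexp]
    · have h2 : e' k ≠ e' k' := fun h => hk (he' h).symm
      simp [dexp, h2, hk]), Finset.sum_ite_eq' Finset.univ k]
  simp

lemma integrable_monomial {i : ℕ} (a b : Fin i → Fin p) (e' : Fin i → Fin n) :
    Integrable (fun Z : Fin p → Fin n → ℝ => ∏ k, Z (a k) (e' k) * Z (b k) (e' k))
      (gaussMatrix p n) := by
  have h := integrable_pi_pi (fun l c x => x ^ (mexp a b e' l c))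
    (fun l c => integrable_pow_gauss _)
  exact h.congr (Filter.Eventually.of_forall fun Z => (monomial_eq a b e' Z).symm)

lemma integral_monomial {i : ℕ} (a b : Fin i → Fin p) (e' : Fin i → Fin n)
    (he' : Function.Injective e') :
    ∫ Z : Fin p → Fin n → ℝ, (∏ k, Z (a k) (e' k) * Z (b k) (e' k)) ∂gaussMatrix p n
      = ∏ k, (if a k = b k then (1:ℝ) else 0) := by
  have hcol : ∀ k, (∏ l, ∫ x, x ^ (mexp a b e' l (e' k)) ∂(gaussianReal 0 1))
      = if a k = b k then (1:ℝ) else 0 := by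
    intro k
    by_cases hab : a k = b k
    · rw [if_pos hab]
      refine Finset.prod_eq_one fun l _ => ?_
      rw [mexp_col a b e' he']
      by_cases hl : l = a k
      · rw [if_pos hl, if_pos (hl.trans hab)]
        exact gauss_m2
      · rw [if_neg hl, if_neg (fun h => hl (h.trans hab.symm))]
        exact gauss_m0
    · rw [if_neg hab]
      refine Finset.prod_eq_zero (Finset.mem_univ (a k)) ?_
      rw [mexp_col a b e' he', if_pos rfl, if_neg (fun h => hab h)]
      exact gauss_m1
  calc ∫ Z : Fin p → Fin n → ℝ, (∏ k, Z (a k) (e' k) * Z (b k) (e' k)) ∂gaussMatrix p n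
      = ∫ Z : Fin p → Fin n → ℝ, (∏ l, ∏ c, (Z l c) ^ (mexp a b e' l c)) ∂gaussMatrix p n :=
        integral_congr_ae (Filter.Eventually.of_forall fun Z => monomial_eq a b e' Z)
    _ = ∏ l, ∏ c, ∫ x, x ^ (mexp a b e' l c) ∂(gaussianReal 0 1) :=
        integral_pi_pi (fun l c x => x ^ (mexp a b e' l c))
    _ = ∏ c, ∏ l, ∫ x, x ^ (mexp a b e' l c) ∂(gaussianReal 0 1) := Finset.prod_comm
    _ = ∏ c ∈ Finset.univ.image e', ∏ l, ∫ x, x ^ (mexp a b e' l c) ∂(gaussianReal 0 1) := by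
        refine (Finset.prod_subset (Finset.subset_univ _) fun c _ hc => ?_).symm
        refine Finset.prod_eq_one fun l _ => ?_
        rw [mexp_eq_zero a b e' l c hc]
        exact gauss_m0
    _ = ∏ k, ∏ l, ∫ x, x ^ (mexp a b e' l (e' k)) ∂(gaussianReal 0 1) :=
        Finset.prod_image fun x _ y _ h => he' h
    _ = ∏ k, (if a k = b k then (1:ℝ) else 0) := Finset.prod_congr rfl fun k _ => hcol k

lemma wick_expand {i : ℕ} (B : Matrix (Fin i) (Fin p) ℝ) (e' : Fin i → Fin n)
    (Z : Fin p → Fin n → ℝ) :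
    (Matrix.det (Matrix.of fun j k => ∑ l, B j l * Z l (e' k)))
      = ∑ q : (Equiv.Perm (Fin i)) × (Fin i → Fin p),
          (((Equiv.Perm.sign q.1 : ℤ) : ℝ) * ∏ k, B (q.1 k) (q.2 k)) * ∏ k, Z (q.2 k) (e' k) := by
  rw [Fintype.sum_prod_type, Matrix.det_apply']
  refine Finset.sum_congr rfl fun σ _ => ?_
  calc ((Equiv.Perm.sign σ : ℤ) : ℝ) * ∏ k, (Matrix.of fun j k => ∑ l, B j l * Z l (e' k)) (σ k) k
      = ((Equiv.Perm.sign σ : ℤ) : ℝ) * ∑ f ∈ Fintype.piFinset (fun _ : Fin i => (Finset.univ : Finset (Fin p))),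
          ∏ k, (B (σ k) (f k) * Z (f k) (e' k)) := by
        rw [show (∏ k, (Matrix.of fun j k => ∑ l, B j l * Z l (e' k)) (σ k) k)
            = ∏ k, ∑ l, B (σ k) l * Z l (e' k) from rfl, Finset.prod_univ_sum]
    _ = ∑ f : Fin i → Fin p,
          (((Equiv.Perm.sign σ : ℤ) : ℝ) * ∏ k, B (σ k) (f k)) * ∏ k, Z (f k) (e' k) := by
        rw [Fintype.piFinset_univ, Finset.mul_sum]
        refine Finset.sum_congr rfl fun f _ => ?_
        rw [Finset.prod_mul_distrib]
        ring

lemma wick_sq_expand {i : ℕ} (B : Matrix (Fin i) (Fin p) ℝ) (e' : Fin i → Fin n)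
    (Z : Fin p → Fin n → ℝ) :
    (Matrix.det (Matrix.of fun j k => ∑ l, B j l * Z l (e' k)))^2
      = ∑ q : (Equiv.Perm (Fin i)) × (Fin i → Fin p),
          ∑ r : (Equiv.Perm (Fin i)) × (Fin i → Fin p),
          ((((Equiv.Perm.sign q.1 : ℤ) : ℝ) * ∏ k, B (q.1 k) (q.2 k))
            * (((Equiv.Perm.sign r.1 : ℤ) : ℝ) * ∏ k, B (r.1 k) (r.2 k)))
            * ∏ k, Z (q.2 k) (e' k) * Z (r.2 k) (e' k) := by
  rw [wick_expand B e' Z, pow_two, Finset.sum_mul_sum]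
  refine Finset.sum_congr rfl fun q _ => Finset.sum_congr rfl fun r _ => ?_
  rw [Finset.prod_mul_distrib]
  ring

lemma sign_sq {i : ℕ} (σ : Equiv.Perm (Fin i)) :
    ((Equiv.Perm.sign σ : ℤ) : ℝ) * ((Equiv.Perm.sign σ : ℤ) : ℝ) = 1 := by
  rcases Int.units_eq_one_or (Equiv.Perm.sign σ) with h | h <;> rw [h] <;> norm_num

lemma wick_integrable {i : ℕ} (B : Matrix (Fin i) (Fin p) ℝ) (e' : Fin i → Fin n) :
    Integrable (fun Z : Fin p → Fin n → ℝ =>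
      (Matrix.det (Matrix.of fun j k => ∑ l, B j l * Z l (e' k)))^2) (gaussMatrix p n) := by
  have h : (fun Z : Fin p → Fin n → ℝ =>
      (Matrix.det (Matrix.of fun j k => ∑ l, B j l * Z l (e' k)))^2)
      = fun Z => ∑ q : (Equiv.Perm (Fin i)) × (Fin i → Fin p),
          ∑ r : (Equiv.Perm (Fin i)) × (Fin i → Fin p),
          ((((Equiv.Perm.sign q.1 : ℤ) : ℝ) * ∏ k, B (q.1 k) (q.2 k))
            * (((Equiv.Perm.sign r.1 : ℤ) : ℝ) * ∏ k, B (r.1 k) (r.2 k)))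
            * ∏ k, Z (q.2 k) (e' k) * Z (r.2 k) (e' k) :=
    funext fun Z => wick_sq_expand B e' Z
  rw [h]
  refine integrable_finset_sum _ fun q _ => integrable_finset_sum _ fun r _ => ?_
  exact (integrable_monomial q.2 r.2 e').const_mul _

lemma prod_ite_funeq {i : ℕ} (f g : Fin i → Fin p) :
    (∏ k, if f k = g k then (1:ℝ) else 0) = if f = g then 1 else 0 := by
  by_cases h : f = g
  · subst h; simp
  · rw [if_neg h]
    obtain ⟨k, hk⟩ := Function.ne_iff.mp h
    exact Finset.prod_eq_zero (Finset.mem_univ k) (by rw [if_neg hk])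

lemma wick_value {i : ℕ} (B : Matrix (Fin i) (Fin p) ℝ) (e' : Fin i → Fin n)
    (he' : Function.Injective e') :
    ∫ Z : Fin p → Fin n → ℝ,
      (Matrix.det (Matrix.of fun j k => ∑ l, B j l * Z l (e' k)))^2 ∂gaussMatrix p n
      = (i.factorial : ℝ) * (B * Bᵀ).det := by
  set C := B * Bᵀ with hC
  have hCapp : ∀ u v, C u v = ∑ l, B u l * B v l := by
    intro u v
    rw [hC, Matrix.mul_apply]
    rfl
  calc ∫ Z : Fin p → Fin n → ℝ,
      (Matrix.det (Matrix.of fun j k => ∑ l, B j l * Z l (e' k)))^2 ∂gaussMatrix p n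
      = ∑ q : (Equiv.Perm (Fin i)) × (Fin i → Fin p),
          ∑ r : (Equiv.Perm (Fin i)) × (Fin i → Fin p),
          ((((Equiv.Perm.sign q.1 : ℤ) : ℝ) * ∏ k, B (q.1 k) (q.2 k))
            * (((Equiv.Perm.sign r.1 : ℤ) : ℝ) * ∏ k, B (r.1 k) (r.2 k)))
            * ∫ Z : Fin p → Fin n → ℝ, (∏ k, Z (q.2 k) (e' k) * Z (r.2 k) (e' k)) ∂gaussMatrix p n := by
        rw [integral_congr_ae (Filter.Eventually.of_forall fun Z => wick_sq_expand B e' Z),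
          integral_finset_sum _ (fun q _ => integrable_finset_sum _ fun r _ =>
            (integrable_monomial q.2 r.2 e').const_mul _)]
        refine Finset.sum_congr rfl fun q _ => ?_
        rw [integral_finset_sum _ (fun r _ => (integrable_monomial q.2 r.2 e').const_mul _)]
        exact Finset.sum_congr rfl fun r _ => integral_const_mul _ _
    _ = ∑ σ : Equiv.Perm (Fin i), ∑ f : Fin i → Fin p, ∑ τ : Equiv.Perm (Fin i), ∑ g : Fin i → Fin p,
          ((((Equiv.Perm.sign σ : ℤ) : ℝ) * ∏ k, B (σ k) (f k))
            * (((Equiv.Perm.sign τ : ℤ) : ℝ) * ∏ k, B (τ k) (g k)))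
            * (if f = g then (1:ℝ) else 0) := by
        rw [Fintype.sum_prod_type]
        refine Finset.sum_congr rfl fun σ _ => Finset.sum_congr rfl fun f _ => ?_
        rw [Fintype.sum_prod_type]
        refine Finset.sum_congr rfl fun τ _ => Finset.sum_congr rfl fun g _ => ?_
        rw [integral_monomial _ _ _ he', prod_ite_funeq]
    _ = ∑ σ : Equiv.Perm (Fin i), ∑ f : Fin i → Fin p, ∑ τ : Equiv.Perm (Fin i),
          (((Equiv.Perm.sign σ : ℤ) : ℝ) * ∏ k, B (σ k) (f k))
            * (((Equiv.Perm.sign τ : ℤ) : ℝ) * ∏ k, B (τ k) (f k)) := by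
        refine Finset.sum_congr rfl fun σ _ => Finset.sum_congr rfl fun f _ =>
          Finset.sum_congr rfl fun τ _ => ?_
        rw [Finset.sum_congr rfl (fun g _ => show
          ((((Equiv.Perm.sign σ : ℤ) : ℝ) * ∏ k, B (σ k) (f k))
            * (((Equiv.Perm.sign τ : ℤ) : ℝ) * ∏ k, B (τ k) (g k)))
            * (if f = g then (1:ℝ) else 0)
          = if g = f then ((((Equiv.Perm.sign σ : ℤ) : ℝ) * ∏ k, B (σ k) (f k))
            * (((Equiv.Perm.sign τ : ℤ) : ℝ) * ∏ k, B (τ k) (g k))) else 0 from by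
          by_cases hg : g = f
          · subst hg; simp
          · rw [if_neg hg, if_neg (fun hh => hg hh.symm), mul_zero]),
          Finset.sum_ite_eq' Finset.univ f]
        simp
    _ = ∑ σ : Equiv.Perm (Fin i), ∑ τ : Equiv.Perm (Fin i),
          (((Equiv.Perm.sign σ : ℤ) : ℝ) * ((Equiv.Perm.sign τ : ℤ) : ℝ))
            * ∏ k, C (σ k) (τ k) := by
        refine Finset.sum_congr rfl fun σ _ => ?_
        rw [Finset.sum_comm]
        refine Finset.sum_congr rfl fun τ _ => ?_
        calc ∑ f : Fin i → Fin p, (((Equiv.Perm.sign σ : ℤ) : ℝ) * ∏ k, B (σ k) (f k))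
              * (((Equiv.Perm.sign τ : ℤ) : ℝ) * ∏ k, B (τ k) (f k))
            = (((Equiv.Perm.sign σ : ℤ) : ℝ) * ((Equiv.Perm.sign τ : ℤ) : ℝ))
              * ∑ f : Fin i → Fin p, ∏ k, (B (σ k) (f k) * B (τ k) (f k)) := by
              rw [Finset.mul_sum]
              refine Finset.sum_congr rfl fun f _ => ?_
              rw [Finset.prod_mul_distrib]
              ring
          _ = (((Equiv.Perm.sign σ : ℤ) : ℝ) * ((Equiv.Perm.sign τ : ℤ) : ℝ))
              * ∏ k, C (σ k) (τ k) := by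
              congr 1
              have hps := Finset.prod_univ_sum (fun _ : Fin i => (Finset.univ : Finset (Fin p)))
                (fun k a => B (σ k) a * B (τ k) a)
              rw [Fintype.piFinset_univ] at hps
              rw [← hps]
              exact Finset.prod_congr rfl fun k _ => (hCapp _ _).symm
    _ = ∑ σ : Equiv.Perm (Fin i), C.det := by
        refine Finset.sum_congr rfl fun σ _ => ?_
        have hdet : ∑ τ : Equiv.Perm (Fin i), (((Equiv.Perm.sign τ : ℤ) : ℝ))
            * ∏ k, C (σ k) (τ k) = (Cᵀ.submatrix id σ).det := by
          rw [Matrix.det_apply']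
          refine (Finset.sum_congr rfl fun τ _ => ?_).symm
          congr 1
        have : ∑ τ : Equiv.Perm (Fin i),
            (((Equiv.Perm.sign σ : ℤ) : ℝ) * ((Equiv.Perm.sign τ : ℤ) : ℝ))
              * ∏ k, C (σ k) (τ k)
            = ((Equiv.Perm.sign σ : ℤ) : ℝ) * (Cᵀ.submatrix id σ).det := by
          rw [← hdet, Finset.mul_sum]
          exact Finset.sum_congr rfl fun τ _ => by ring
        rw [this, Matrix.det_permute', Matrix.det_transpose, ← mul_assoc, sign_sq, one_mul]
    _ = (i.factorial : ℝ) * C.det := by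
        rw [Finset.sum_const, Finset.card_univ, Fintype.card_perm, Fintype.card_fin, nsmul_eq_mul]

end Wick

section MinorSum

lemma submatrix_mul_submatrix {l m o q q' : Type*} [Fintype m] (P : Matrix l m ℝ)
    (Q : Matrix m o ℝ) (r : q → l) (c : q' → o) :
    (P * Q).submatrix r c = (P.submatrix r id) * (Q.submatrix id c) := by
  ext j k
  simp [Matrix.mul_apply]

lemma submatrix_one_inj {q m : Type*} [Fintype q] [DecidableEq q] [DecidableEq m]
    {f : q → m} (hf : Function.Injective f) :
    (1 : Matrix m m ℝ).submatrix f f = (1 : Matrix q q ℝ) := by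
  ext j k
  by_cases h : j = k
  · subst h; simp
  · rw [Matrix.submatrix_apply, Matrix.one_apply_ne (fun hc => h (hf hc)),
      Matrix.one_apply_ne h]

theorem trElem_eq_sum_minors {p : ℕ} (i : ℕ) [Nonempty (Fin p)]
    (M : Matrix (Fin p) (Fin p) ℝ) (hM : M.IsHermitian) :
    trElem M i = ∑ J ∈ Finset.powersetCard i (Finset.univ : Finset (Fin p)),
      (M.submatrix (emb i J) (emb i J)).det := by
  classical
  set V : Matrix (Fin p) (Fin p) ℝ := (hM.eigenvectorUnitary : Matrix (Fin p) (Fin p) ℝ) with hV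
  set d : Fin p → ℝ := hM.eigenvalues with hd
  have hstar : star V = Vᵀ := by
    ext a b
    simp [Matrix.star_apply]
  have hspec : M = V * Matrix.diagonal d * Vᵀ := by
    rw [← hstar]
    have := hM.spectral_theorem
    simpa using this
  have hVtV : Vᵀ * V = 1 := by
    rw [← hstar]
    exact Matrix.mem_unitaryGroup_iff'.mp hM.eigenvectorUnitary.2
  -- each principal minor via Cauchy-Binet
  have hminor : ∀ J ∈ Finset.powersetCard i (Finset.univ : Finset (Fin p)),
      (M.submatrix (emb i J) (emb i J)).det
        = ∑ K ∈ Finset.powersetCard i (Finset.univ : Finset (Fin p)),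
            (∏ j ∈ K, d j) * ((V.submatrix (emb i J) (emb i K)).det
              * (V.submatrix (emb i J) (emb i K)).det) := by
    intro J hJ
    rw [Finset.mem_powersetCard] at hJ
    have hsub : M.submatrix (emb i J) (emb i J)
        = ((V * Matrix.diagonal d).submatrix (emb i J) id)
          * (Vᵀ.submatrix id (emb i J)) := by
      rw [← submatrix_mul_submatrix, ← hspec]
    rw [hsub, cauchyBinet]
    refine Finset.sum_congr rfl fun K hK => ?_
    rw [Finset.mem_powersetCard] at hK
    rw [Matrix.submatrix_submatrix, Matrix.submatrix_submatrix]
    simp only [Function.comp_id, Function.id_comp]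
    have h1 : (V * Matrix.diagonal d).submatrix (emb i J) (emb i K)
        = (V.submatrix (emb i J) (emb i K)) * Matrix.diagonal (fun k => d (emb i K k)) := by
      ext a b
      rw [Matrix.submatrix_apply, Matrix.mul_diagonal, Matrix.mul_diagonal,
        Matrix.submatrix_apply]
    have h2 : Vᵀ.submatrix (emb i K) (emb i J)
        = (V.submatrix (emb i J) (emb i K))ᵀ := by
      ext a b
      simp
    rw [h1, h2, Matrix.det_mul, Matrix.det_diagonal, Matrix.det_transpose, emb_prod hK.2]
    ring
  rw [Finset.sum_congr rfl hminor, Finset.sum_comm]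
  have horth : ∀ K ∈ Finset.powersetCard i (Finset.univ : Finset (Fin p)),
      ∑ J ∈ Finset.powersetCard i (Finset.univ : Finset (Fin p)),
        (V.submatrix (emb i J) (emb i K)).det * (V.submatrix (emb i J) (emb i K)).det = 1 := by
    intro K hK
    rw [Finset.mem_powersetCard] at hK
    have key : ((Vᵀ.submatrix (emb i K) id) * (V.submatrix id (emb i K))).det = 1 := by
      rw [← submatrix_mul_submatrix, hVtV, submatrix_one_inj (emb_inj hK.2), Matrix.det_one]
    rw [cauchyBinet] at key
    rw [← key]
    refine Finset.sum_congr rfl fun J hJ => ?_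
    rw [Matrix.submatrix_submatrix, Matrix.submatrix_submatrix]
    simp only [Function.comp_id, Function.id_comp]
    have h2 : Vᵀ.submatrix (emb i K) (emb i J)
        = (V.submatrix (emb i J) (emb i K))ᵀ := by
      ext a b
      simp
    rw [h2, Matrix.det_transpose]
  rw [trElem, dif_pos hM]
  refine (Finset.sum_congr rfl fun K hK => ?_)
  rw [← Finset.mul_sum, horth K hK, mul_one]

end MinorSum

lemma psdSqrt_transpose {p : ℕ} {S : Matrix (Fin p) (Fin p) ℝ} (hS : S.PosSemidef) :
    (psdSqrt hS)ᵀ = psdSqrt hS := by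
  simp [psdSqrt, Matrix.transpose_mul, Matrix.mul_assoc, Matrix.star_eq_conjTranspose,
    Matrix.conjTranspose_eq_transpose_of_trivial]

lemma psdSqrt_mul_self {p : ℕ} {S : Matrix (Fin p) (Fin p) ℝ} (hS : S.PosSemidef) :
    psdSqrt hS * psdSqrt hS = S := by
  have hU := Matrix.mem_unitaryGroup_iff'.mp hS.1.eigenvectorUnitary.2
  have hsp := hS.1.spectral_theorem
  rw [Unitary.conjStarAlgAut_apply] at hsp
  conv_rhs => rw [hsp]
  simp only [psdSqrt, Matrix.mul_assoc]
  rw [← Matrix.mul_assoc (star _) (hS.1.eigenvectorUnitary : Matrix (Fin p) (Fin p) ℝ), hU,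
    Matrix.one_mul, ← Matrix.mul_assoc (diagonal _), diagonal_mul_diagonal]
  congr 3
  funext j
  simp only [Function.comp_apply]
  exact Real.mul_self_sqrt (hS.eigenvalues_nonneg j)

/-- For the central Wishart matrix `W = (Σ^{1/2}Z)(Σ^{1/2}Z)ᵀ` with
`Z` a `p × n` matrix of i.i.d. standard normals and `Σ` symmetric positive semidefinite,
for `1 ≤ i ≤ p ≤ n`: `E[Tr_i(W)] = (n)_i · Tr_i(Σ)`, where `(n)_i` is the falling
factorial. -/
theorem stmt_11 (p n : ℕ) (S : Matrix (Fin p) (Fin p) ℝ) (hS : S.PosSemidef)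
    (i : ℕ) (hi1 : 1 ≤ i) (hip : i ≤ p) (hpn : p ≤ n) :
    (∫ Z : Fin p → Fin n → ℝ,
        trElem ((psdSqrt hS * Matrix.of Z) * (psdSqrt hS * Matrix.of Z)ᵀ) i
        ∂gaussMatrix p n) =
      (n.descFactorial i : ℝ) * trElem S i := by
  haveI : Nonempty (Fin p) := ⟨⟨0, lt_of_lt_of_le hi1 hip⟩⟩
  haveI : Nonempty (Fin n) := ⟨⟨0, lt_of_lt_of_le (lt_of_lt_of_le hi1 hip) hpn⟩⟩
  set A := psdSqrt hS with hA
  have hAsymm : Aᵀ = A := by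
    exact psdSqrt_transpose hS
  have hAAt : A * Aᵀ = S := by rw [hAsymm]; exact psdSqrt_mul_self hS
  have hW : ∀ Z : Fin p → Fin n → ℝ, ((A * Matrix.of Z) * (A * Matrix.of Z)ᵀ).IsHermitian := by
    intro Z
    have h := Matrix.isHermitian_mul_conjTranspose_self (A * Matrix.of Z)
    have hct : (A * Matrix.of Z)ᴴ = (A * Matrix.of Z)ᵀ := by
      ext a b; simp [Matrix.conjTranspose_apply]
    rwa [hct] at h
  have hpt : ∀ Z : Fin p → Fin n → ℝ,
      trElem ((A * Matrix.of Z) * (A * Matrix.of Z)ᵀ) i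
        = ∑ J ∈ Finset.powersetCard i (Finset.univ : Finset (Fin p)),
            ∑ K ∈ Finset.powersetCard i (Finset.univ : Finset (Fin n)),
              (Matrix.det (Matrix.of fun j k =>
                ∑ l, (A.submatrix (emb i J) id) j l * Z l (emb i K k)))^2 := by
    intro Z
    rw [trElem_eq_sum_minors i _ (hW Z)]
    refine Finset.sum_congr rfl fun J hJ => ?_
    rw [Finset.mem_powersetCard] at hJ
    set X := A * Matrix.of Z with hX
    have hsub : (X * Xᵀ).submatrix (emb i J) (emb i J)
        = (X.submatrix (emb i J) id) * (Xᵀ.submatrix id (emb i J)) :=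
      submatrix_mul_submatrix X Xᵀ _ _
    rw [hsub, cauchyBinet]
    refine Finset.sum_congr rfl fun K hK => ?_
    rw [Finset.mem_powersetCard] at hK
    rw [Matrix.submatrix_submatrix, Matrix.submatrix_submatrix]
    simp only [Function.comp_id, Function.id_comp]
    have h1 : X.submatrix (emb i J) (emb i K)
        = Matrix.of fun j k => ∑ l, (A.submatrix (emb i J) id) j l * Z l (emb i K k) := by
      ext a b
      rw [Matrix.submatrix_apply, hX, Matrix.mul_apply]
      rfl
    have h2 : Xᵀ.submatrix (emb i K) (emb i J) = (X.submatrix (emb i J) (emb i K))ᵀ := by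
      ext a b; simp
    rw [h2, Matrix.det_transpose, h1]
    exact (sq _).symm
  rw [integral_congr_ae (Filter.Eventually.of_forall hpt),
    integral_finset_sum _ (fun J _ => integrable_finset_sum _ fun K _ => wick_integrable _ _)]
  have hJval : ∀ J ∈ Finset.powersetCard i (Finset.univ : Finset (Fin p)),
      (∫ Z : Fin p → Fin n → ℝ,
          ∑ K ∈ Finset.powersetCard i (Finset.univ : Finset (Fin n)),
            (Matrix.det (Matrix.of fun j k =>
              ∑ l, (A.submatrix (emb i J) id) j l * Z l (emb i K k)))^2 ∂gaussMatrix p n)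
        = (n.choose i : ℝ) * ((i.factorial : ℝ)
            * (S.submatrix (emb i J) (emb i J)).det) := by
    intro J hJ
    rw [integral_finset_sum _ (fun K _ => wick_integrable _ _)]
    have hKval : ∀ K ∈ Finset.powersetCard i (Finset.univ : Finset (Fin n)),
        (∫ Z : Fin p → Fin n → ℝ,
            (Matrix.det (Matrix.of fun j k =>
              ∑ l, (A.submatrix (emb i J) id) j l * Z l (emb i K k)))^2 ∂gaussMatrix p n)
          = (i.factorial : ℝ) * (S.submatrix (emb i J) (emb i J)).det := by
      intro K hK
      rw [Finset.mem_powersetCard] at hK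
      rw [wick_value _ _ (emb_inj hK.2)]
      congr 1
      rw [Matrix.transpose_submatrix, ← submatrix_mul_submatrix, hAAt]
    rw [Finset.sum_congr rfl hKval, Finset.sum_const, Finset.card_powersetCard,
      Finset.card_univ, Fintype.card_fin, nsmul_eq_mul]
  rw [Finset.sum_congr rfl hJval, ← Finset.mul_sum, ← Finset.mul_sum,
    ← trElem_eq_sum_minors i S hS.1, Nat.descFactorial_eq_factorial_mul_choose]
  push_cast
  ring
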